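/- Let f : ℝ^p → ℝ be twice continuously differentiable, convex, and standard self-concordant with ∇²f(x) positive definite for all x, and let g : ℝ^p → ℝ ∪ {+∞} be proper, closed, and μ_g-strongly convex with μ_g > 0. Let x⁰ ∈ dom f ∩ dom g, ξ⁰ ∈ ∂g(x⁰) with ∇f(x⁰) + ξ⁰ ≠ 0, and β > 0. If τ₀ ∈ (0,1] satisfies τ₀ ≤ β μ_g / ( (1 + β)·λ_max(∇²f(x⁰))^{1/2}·‖∇f(x⁰) + ξ⁰‖₂ ), where λ_max(∇²f(x⁰)) is the maximum eigenvalue of ∇²f(x⁰), then the solution x*_{τ₀} of the parametric optimality condition at τ₀ satisfies ‖x⁰ − x*_{τ₀}‖_{x*_{τ₀}} ≤ β. -/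

import Mathlib

open Set
open scoped RealInnerProductSpace

noncomputable section

/-- `ℝ^p` with the Euclidean inner product. -/
abbrev Euc (p : ℕ) := EuclideanSpace ℝ (Fin p)

/-- The weighted (local) norm `‖u‖_H := √⟪H u, u⟫` induced by an operator `H`. -/
noncomputable def wnorm {p : ℕ} (H : Euc p →L[ℝ] Euc p) (u : Euc p) : ℝ :=
  Real.sqrt ⟪H u, u⟫

/-- `v` is a subgradient at `y` of the proper convex function equal to `g` on its
effective domain `S` (and `+∞` outside). -/
def IsSubgradient {p : ℕ} (g : Euc p → ℝ) (S : Set (Euc p)) (v y : Euc p) : Prop :=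
  y ∈ S ∧ ∀ z ∈ S, g y + ⟪v, z - y⟫ ≤ g z

/-- Closedness of the extended-real-valued function equal to `g` on `S` and `+∞`
outside, expressed as closedness of its epigraph. -/
def ClosedOn {p : ℕ} (g : Euc p → ℝ) (S : Set (Euc p)) : Prop :=
  IsClosed {q : Euc p × ℝ | q.1 ∈ S ∧ g q.1 ≤ q.2}

lemma subgrad_strong {p : ℕ} {g : Euc p → ℝ} {Dg : Set (Euc p)} {μg : ℝ}
    (hμ : 0 < μg) (hg : StrongConvexOn Dg μg g) {v y x : Euc p} (hx : x ∈ Dg)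
    (hv : IsSubgradient g Dg v y) :
    ⟪v, x - y⟫ ≤ g x - g y - μg / 2 * ‖x - y‖ ^ 2 := by
  set C : ℝ := μg / 2 * ‖x - y‖ ^ 2 with hC
  have hC0 : 0 ≤ C := by positivity
  have key : ∀ t ∈ Ioc (0:ℝ) 1, ⟪v, x - y⟫ ≤ g x - g y - (1 - t) * C := by
    intro t ht
    have ht0 := ht.1
    have ht1 := ht.2
    have hconv := hg.2 hv.1 hx (show (0:ℝ) ≤ 1 - t by linarith) ht0.le (by ring)
    have hmem : (1 - t) • y + t • x ∈ Dg := hg.1 hv.1 hx (by linarith) ht0.le (by ring)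
    have hsub := hv.2 _ hmem
    have hin : ⟪v, ((1 - t) • y + t • x) - y⟫ = t * ⟪v, x - y⟫ := by
      rw [show ((1 - t) • y + t • x) - y = t • (x - y) by module, real_inner_smul_right]
    rw [hin] at hsub
    have hnorm : ‖y - x‖ = ‖x - y‖ := norm_sub_rev _ _
    rw [hnorm] at hconv
    have : g y + t * ⟪v, x - y⟫ ≤ (1 - t) * g y + t * g x - (1 - t) * t * C := by
      calc g y + t * ⟪v, x - y⟫ ≤ g ((1 - t) • y + t • x) := hsub
        _ ≤ (1 - t) * g y + t * g x - (1 - t) * t * C := by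
            simpa [smul_eq_mul, hC] using hconv
    nlinarith
  by_contra h
  push_neg at h
  set δ : ℝ := ⟪v, x - y⟫ - (g x - g y - C) with hδ
  have hδ0 : 0 < δ := by rw [hδ]; linarith
  rcases eq_or_lt_of_le hC0 with hCz | hCp
  · have h1 := key 1 ⟨one_pos, le_refl 1⟩
    rw [hδ, ← hCz] at hδ0
    linarith
  · set t : ℝ := min 1 (δ / (2 * C)) with htdef
    have htpos : 0 < t := lt_min one_pos (by positivity)
    have ht1 : t ≤ 1 := min_le_left _ _
    have := key t ⟨htpos, ht1⟩
    have htC : t * C ≤ δ / 2 := by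
      have : t ≤ δ / (2 * C) := min_le_right _ _
      calc t * C ≤ (δ / (2 * C)) * C := by nlinarith
        _ = δ / 2 := by field_simp
    nlinarith

set_option maxHeartbeats 1000000 in
/-- The choice of `τ₀` when `g` is strongly convex guarantees
`‖x⁰ - x*_{τ₀}‖_{x*_{τ₀}} ≤ β`. -/
theorem stmt_13 {p : ℕ}
    (f g : Euc p → ℝ) (Dg : Set (Euc p))
    (f' : Euc p → Euc p)
    (f'' : Euc p → Euc p →L[ℝ] Euc p)
    (f''' : Euc p → Euc p →L[ℝ] Euc p →L[ℝ] Euc p)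
    (μg β τ0 lmax : ℝ)
    (x0 ξ0 xsol : Euc p)
    -- `f` is twice (indeed three times) continuously differentiable and convex, with
    -- positive definite Hessians, and standard self-concordant
    (hf_smooth : ContDiff ℝ 3 f)
    (hf_convex : ConvexOn ℝ univ f)
    (hf_grad : ∀ z, HasGradientAt f (f' z) z)
    (hf_hess : ∀ z, HasFDerivAt f' (f'' z) z)
    (hf_third : ∀ z, HasFDerivAt f'' (f''' z) z)
    (hf_posdef : ∀ z, ∀ u : Euc p, u ≠ 0 → 0 < ⟪f'' z u, u⟫)
    (hf_sc : ∀ z, ∀ u : Euc p,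
      |⟪f''' z u u, u⟫| ≤ 2 * ⟪f'' z u, u⟫ ^ ((3 : ℝ) / 2))
    -- `g` is proper, closed, and `μg`-strongly convex
    (hg_proper : Dg.Nonempty)
    (hg_closed : ClosedOn g Dg)
    (hμg : 0 < μg)
    (hg_strong : StrongConvexOn Dg μg g)
    -- initial point, subgradient, and `β`
    (hx0 : x0 ∈ Dg)
    (hξ0 : IsSubgradient g Dg ξ0 x0)
    (hne : f' x0 + ξ0 ≠ 0)
    (hβ : 0 < β)
    -- `lmax` is the maximum eigenvalue of `∇²f(x⁰)`
    (hlmax : IsGreatest {r : ℝ | ∃ u : Euc p, ‖u‖ = 1 ∧ r = ⟪f'' x0 u, u⟫} lmax)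
    -- the choice of `τ₀`
    (hτ0 : τ0 ∈ Ioc (0 : ℝ) 1)
    (hτ0_le : τ0 ≤ β * μg / ((1 + β) * Real.sqrt lmax * ‖f' x0 + ξ0‖))
    -- `xsol` solves the parametric optimality condition at `τ₀`
    (hxsol : IsSubgradient g Dg ((1 - τ0) • ξ0 - τ0 • f' xsol) xsol) :
    wnorm (f'' xsol) (x0 - xsol) ≤ β := by
  by_cases hu0 : x0 - xsol = 0
  · simp [wnorm, hu0]
    linarith
  set u : Euc p := x0 - xsol with hu
  set N : ℝ := ‖f' x0 + ξ0‖ with hNdef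
  have hN : 0 < N := norm_pos_iff.2 hne
  set r : ℝ := ‖u‖ with hrdef
  have hr : 0 < r := norm_pos_iff.2 hu0
  -- Step A : strong monotonicity of the subdifferential of g
  have hA1 := subgrad_strong hμg hg_strong hxsol.1 hξ0
  have hA2 := subgrad_strong hμg hg_strong hx0 hxsol
  have e1 : xsol - x0 = -u := by rw [hu]; abel
  rw [e1, norm_neg, inner_neg_right] at hA1
  rw [show x0 - xsol = u from rfl] at hA2
  have hA2' : (1 - τ0) * ⟪ξ0, u⟫ - τ0 * ⟪f' xsol, u⟫ ≤
      g x0 - g xsol - μg / 2 * r ^ 2 := by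
    have : ⟪(1 - τ0) • ξ0 - τ0 • f' xsol, u⟫
        = (1 - τ0) * ⟪ξ0, u⟫ - τ0 * ⟪f' xsol, u⟫ := by
      rw [inner_sub_left, real_inner_smul_left, real_inner_smul_left]
    rw [← this]; exact hA2
  have hmono : μg * r ^ 2 ≤ τ0 * (⟪f' xsol, u⟫ + ⟪ξ0, u⟫) := by nlinarith
  -- Step B : monotonicity of the gradient of f
  have hB : ⟪f' xsol, u⟫ ≤ ⟪f' x0, u⟫ := by
    set φ : ℝ → ℝ := fun s => ⟪f' (xsol + s • u), u⟫ with hφ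
    have hφd : ∀ s : ℝ, HasDerivAt φ ⟪(f'' (xsol + s • u)) u, u⟫ s := by
      intro s
      have hcd : HasDerivAt (fun s : ℝ => xsol + s • u) u s := by
        simpa using ((hasDerivAt_id s).smul_const u).const_add xsol
      have h1 : HasDerivAt (fun s : ℝ => f' (xsol + s • u)) ((f'' (xsol + s • u)) u) s :=
        (hf_hess _).comp_hasDerivAt s hcd
      simpa using h1.inner ℝ (hasDerivAt_const s u)
    have hmonoφ : Monotone φ := by
      refine monotone_of_deriv_nonneg (fun s => (hφd s).differentiableAt) fun s => ?_
      rw [(hφd s).deriv]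
      exact (hf_posdef _ u hu0).le
    have h01 := hmonoφ (zero_le_one)
    have ho : xsol + u = x0 := by rw [hu]; abel
    simp only [hφ] at h01
    rw [zero_smul, add_zero, one_smul, ho] at h01
    exact h01
  -- Cauchy-Schwarz
  have hCS : ⟪f' x0, u⟫ + ⟪ξ0, u⟫ ≤ N * r := by
    have : ⟪f' x0 + ξ0, u⟫ ≤ N * r := real_inner_le_norm _ _
    rwa [inner_add_left] at this
  have hμr : μg * r ≤ τ0 * N := by nlinarith [hτ0.1]
  -- lmax bounds
  have hd2 : ⟪(f'' x0) u, u⟫ ≤ lmax * r ^ 2 := by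
    have hmem : r⁻¹ * r⁻¹ * ⟪(f'' x0) u, u⟫ ∈
        {s : ℝ | ∃ w : Euc p, ‖w‖ = 1 ∧ s = ⟪(f'' x0) w, w⟫} := by
      refine ⟨r⁻¹ • u, ?_, ?_⟩
      · rw [norm_smul, Real.norm_eq_abs, abs_inv, abs_of_pos hr, ← hrdef,
          inv_mul_cancel₀ hr.ne']
      · rw [map_smul, real_inner_smul_left, real_inner_smul_right]
        ring
    have hle := hlmax.2 hmem
    have h3 : ⟪(f'' x0) u, u⟫ = r ^ 2 * (r⁻¹ * r⁻¹ * ⟪(f'' x0) u, u⟫) := by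
      field_simp
    rw [h3]
    nlinarith [sq_nonneg r]
  have hlmax_pos : 0 < lmax := by
    obtain ⟨e, he1, heq⟩ := hlmax.1
    have he0 : e ≠ 0 := by intro h; rw [h] at he1; simp at he1
    rw [heq]; exact hf_posdef x0 e he0
  set d : ℝ := Real.sqrt ⟪(f'' x0) u, u⟫ with hd
  have hdpos : 0 < d := Real.sqrt_pos.2 (hf_posdef x0 u hu0)
  have hdle : d ≤ Real.sqrt lmax * r := by
    rw [hd]
    calc Real.sqrt ⟪(f'' x0) u, u⟫ ≤ Real.sqrt (lmax * r ^ 2) := Real.sqrt_le_sqrt hd2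
      _ = Real.sqrt lmax * r := by
          rw [Real.sqrt_mul hlmax_pos.le, Real.sqrt_sq hr.le]
  have hslmax : 0 < Real.sqrt lmax := Real.sqrt_pos.2 hlmax_pos
  -- combine: d * (1 + β) ≤ β
  have hτden : τ0 * ((1 + β) * Real.sqrt lmax * N) ≤ β * μg := by
    have hden : 0 < (1 + β) * Real.sqrt lmax * N := by positivity
    rw [← le_div_iff₀ hden]
    exact hτ0_le
  have hdβ : d * (1 + β) ≤ β := by
    have h1a := mul_le_mul_of_nonneg_left hdle hμg.le
    have h1b := mul_le_mul_of_nonneg_left hμr hslmax.le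
    have h1 : μg * d ≤ Real.sqrt lmax * (τ0 * N) := by linarith
    have h2 := mul_le_mul_of_nonneg_right h1 (by linarith : (0:ℝ) ≤ 1 + β)
    nlinarith
  have hd1 : d < 1 := by nlinarith
  -- Step C : self-concordance along the segment
  set c : ℝ → Euc p := fun s => x0 + s • (xsol - x0) with hc
  set ψ : ℝ → ℝ := fun s => ⟪(f'' (c s)) u, u⟫ with hψ
  have hψpos : ∀ s, 0 < ψ s := fun s => hf_posdef _ u hu0
  have hψd : ∀ s, HasDerivAt ψ ⟪(f''' (c s) (xsol - x0)) u, u⟫ s := by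
    intro s
    have hcd : HasDerivAt c (xsol - x0) s := by
      simpa [hc] using ((hasDerivAt_id s).smul_const (xsol - x0)).const_add x0
    have hF : HasDerivAt (fun s => f'' (c s)) ((f''' (c s)) (xsol - x0)) s :=
      (hf_third (c s)).comp_hasDerivAt s hcd
    have h1 : HasDerivAt (fun s => (f'' (c s)) u) ((f''' (c s)) (xsol - x0) u) s := by
      simpa using hF.clm_apply (hasDerivAt_const s u)
    simpa [hψ] using h1.inner ℝ (hasDerivAt_const s u)
  have hDle : ∀ s, ⟪(f''' (c s) (xsol - x0)) u, u⟫ ≤ 2 * ψ s * Real.sqrt (ψ s) := by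
    intro s
    have hneg : (f''' (c s)) (xsol - x0) = -((f''' (c s)) u) := by
      rw [e1, map_neg]
    have hval : ⟪(f''' (c s) (xsol - x0)) u, u⟫ = -⟪(f''' (c s)) u u, u⟫ := by
      rw [hneg, ContinuousLinearMap.neg_apply, inner_neg_left]
    have hsc := hf_sc (c s) u
    have hrpow : ⟪(f'' (c s)) u, u⟫ ^ ((3:ℝ)/2) = ψ s * Real.sqrt (ψ s) := by
      have hpos := hψpos s
      rw [show ((3:ℝ)/2) = 1 + 1/2 by norm_num,
        Real.rpow_add hpos, Real.rpow_one, ← Real.sqrt_eq_rpow]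
    rw [hval]
    calc -⟪(f''' (c s)) u u, u⟫ ≤ |⟪(f''' (c s)) u u, u⟫| := neg_le_abs _
      _ ≤ 2 * ⟪(f'' (c s)) u, u⟫ ^ ((3:ℝ)/2) := hsc
      _ = 2 * (ψ s * Real.sqrt (ψ s)) := by rw [hrpow]
      _ = 2 * ψ s * Real.sqrt (ψ s) := by ring
  set G : ℝ → ℝ := fun s => (Real.sqrt (ψ s))⁻¹ + s with hG
  have hGd : ∀ s, HasDerivAt G
      (-(⟪(f''' (c s) (xsol - x0)) u, u⟫ / (2 * Real.sqrt (ψ s))) / (Real.sqrt (ψ s)) ^ 2 + 1) s := by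
    intro s
    have h1 := ((hψd s).sqrt (hψpos s).ne')
    have h2 := h1.inv (Real.sqrt_ne_zero'.2 (hψpos s))
    exact h2.add (hasDerivAt_id s)
  have hGmono : Monotone G := by
    refine monotone_of_deriv_nonneg (fun s => (hGd s).differentiableAt) fun s => ?_
    rw [(hGd s).deriv]
    set a : ℝ := Real.sqrt (ψ s) with ha
    have hapos : 0 < a := Real.sqrt_pos.2 (hψpos s)
    have ha2 : a ^ 2 = ψ s := Real.sq_sqrt (hψpos s).le
    have hDs := hDle s
    have hquot : ⟪(f''' (c s) (xsol - x0)) u, u⟫ / (2 * a) / a ^ 2 ≤ 1 := by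
      rw [div_div, div_le_one (by positivity)]
      nlinarith
    have : -(⟪(f''' (c s) (xsol - x0)) u, u⟫ / (2 * a)) / a ^ 2
        = -(⟪(f''' (c s) (xsol - x0)) u, u⟫ / (2 * a) / a ^ 2) := by ring
    rw [this]
    linarith
  have hG01 := hGmono (zero_le_one)
  have hψ0 : ψ 0 = ⟪(f'' x0) u, u⟫ := by simp [hψ, hc]
  have hψ1 : ψ 1 = ⟪(f'' xsol) u, u⟫ := by
    have hc1 : c 1 = xsol := by simp [hc]
    show (⟪(f'' (c 1)) u, u⟫ : ℝ) = _
    rw [hc1]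
  set w : ℝ := Real.sqrt ⟪(f'' xsol) u, u⟫ with hw
  have hwpos : 0 < w := Real.sqrt_pos.2 (hf_posdef xsol u hu0)
  have hkey : d⁻¹ ≤ w⁻¹ + 1 := by
    have : (Real.sqrt (ψ 0))⁻¹ + 0 ≤ (Real.sqrt (ψ 1))⁻¹ + 1 := hG01
    rw [hψ0, hψ1] at this
    rw [hd, hw]
    linarith
  -- conclude
  have hwd : w ≤ d + d * w := by
    have hmul := mul_le_mul_of_nonneg_right hkey (by positivity : (0:ℝ) ≤ d * w)
    have hL : d⁻¹ * (d * w) = w := by field_simp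
    have hR : (w⁻¹ + 1) * (d * w) = d + d * w := by
      field_simp
    rw [hL, hR] at hmul
    exact hmul
  show Real.sqrt ⟪(f'' xsol) u, u⟫ ≤ β
  rw [← hw]
  nlinarith


end
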